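/- arXiv:2502.04187 — 2 statements merged into one kernel-verified Lean document; each statement's English description precedes it below -/
import Mathlib

section
/- Let 0<α<β≤1. For every h∈Höl_β(X,d) and every f∈H_α, the pointwise product hf lies in H_α, and there is a constant C independent of h and f such that ‖hf‖_{E_α} ≤ C·‖h‖_{Höl_β}·‖f‖_{E_α}; that is, H_α is a Banach module over Höl_β(X,d). -/
open MeasureTheory Metric ENNReal NNReal

noncomputable section


private lemma pow_rpow_comm (q : ℝ) (hq : 0 ≤ q) (n : ℕ) (e : ℝ) :
    (q ^ n) ^ e = (q ^ e) ^ n := by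
  rw [← Real.rpow_natCast q n, ← Real.rpow_mul hq, mul_comm, Real.rpow_mul hq,
    Real.rpow_natCast]

private lemma kernel_bound {X : Type*} [MetricSpace X] [CompactSpace X] [MeasurableSpace X]
    [BorelSpace X] (μ : Measure X) [IsFiniteMeasure μ]
    (df : ℝ) (hdf : 0 < df) (CA : ℝ) (hCA : 1 ≤ CA)
    (hA : ∀ (x : X) (r : ℝ), 0 ≤ r → r < Metric.diam (Set.univ : Set X) →
        (μ (Metric.closedBall x r)).toReal ≤ CA * r ^ df)
    (e : ℝ) (he : 0 < e + df) :
    ∃ K : ℝ, 1 ≤ K ∧ ∀ y : X, ∫⁻ x, ENNReal.ofReal (dist x y ^ e) ∂μ ≤ ENNReal.ofReal K := by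
  set D := Metric.diam (Set.univ : Set X) with hD
  have hD0 : 0 ≤ D := Metric.diam_nonneg
  have hDlt : ∀ x y : X, dist x y ≤ D := fun x y =>
    Metric.dist_le_diam_of_mem isCompact_univ.isBounded trivial trivial
  set M := (μ Set.univ).toReal with hM
  have hM0 : 0 ≤ M := ENNReal.toReal_nonneg
  have hμuniv : μ Set.univ = ENNReal.ofReal M := (ENNReal.ofReal_toReal (measure_ne_top μ _)).symm
  rcases le_or_gt 0 e with he0 | he0
  · -- e ≥ 0 : kernel bounded by D^e
    refine ⟨max 1 (D ^ e * M), le_max_left _ _, fun y => ?_⟩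
    calc ∫⁻ x, ENNReal.ofReal (dist x y ^ e) ∂μ
        ≤ ∫⁻ _x, ENNReal.ofReal (D ^ e) ∂μ := lintegral_mono fun x =>
          ENNReal.ofReal_le_ofReal (Real.rpow_le_rpow dist_nonneg (hDlt x y) he0)
      _ = ENNReal.ofReal (D ^ e) * μ Set.univ := lintegral_const _
      _ = ENNReal.ofReal (D ^ e * M) := by
          rw [hμuniv, ← ENNReal.ofReal_mul (Real.rpow_nonneg hD0 _)]
      _ ≤ ENNReal.ofReal (max 1 (D ^ e * M)) := ENNReal.ofReal_le_ofReal (le_max_right _ _)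
  · rcases eq_or_lt_of_le hD0 with hD0' | hDpos
    · -- diameter zero
      refine ⟨1, le_refl 1, fun y => ?_⟩
      have hz : ∀ x : X, ENNReal.ofReal (dist x y ^ e) = 0 := fun x => by
        have hxy : dist x y = 0 := le_antisymm (hD0' ▸ hDlt x y) dist_nonneg
        rw [hxy, Real.zero_rpow (ne_of_lt he0), ENNReal.ofReal_zero]
      rw [lintegral_congr hz, lintegral_zero]
      exact zero_le
    · -- main case : annuli decomposition
      set q : ℝ := 2⁻¹ with hq
      have hq0 : (0:ℝ) < q := by norm_num [hq]
      have hq1 : q < 1 := by norm_num [hq]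
      set CA' : ℝ := CA + M / D ^ df with hCA'
      have hDdf : (0:ℝ) < D ^ df := Real.rpow_pos_of_pos hDpos df
      have hCA'1 : 1 ≤ CA' := le_trans hCA (le_add_of_nonneg_right (by positivity))
      have hCA'0 : 0 ≤ CA' := by linarith
      set u : ℝ := q ^ e with hu
      set v : ℝ := q ^ df with hv
      have hu0 : 0 < u := Real.rpow_pos_of_pos hq0 e
      have hv0 : 0 < v := Real.rpow_pos_of_pos hq0 df
      set w : ℝ := u * v with hw
      have hw0 : 0 ≤ w := le_of_lt (mul_pos hu0 hv0)
      have hw1 : w < 1 := by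
        have : w = q ^ (e + df) := by rw [hw, hu, hv, ← Real.rpow_add hq0]
        rw [this]
        exact Real.rpow_lt_one (le_of_lt hq0) hq1 he
      set c : ℝ := CA' * (D ^ e * D ^ df * u) with hc
      have hc0 : 0 ≤ c := by positivity
      refine ⟨max 1 (c * (1 - w)⁻¹), le_max_left _ _, fun y => ?_⟩
      set r : ℕ → ℝ := fun k => D * q ^ k with hr
      have hr0 : ∀ k, 0 < r k := fun k => mul_pos hDpos (pow_pos hq0 k)
      set B : ℕ → Set X := fun k => Metric.closedBall y (r k) with hB
      -- covering
      have cover : (Set.univ : Set X) ⊆ {y} ∪ ⋃ k, (B k \ B (k + 1)) := by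
        intro x _
        by_cases hxy : x = y
        · exact Set.mem_union_left _ (by simp [hxy])
        · have hx0 : 0 < dist x y := dist_pos.mpr hxy
          have hPex : ∃ n, ¬ dist x y ≤ r n := by
            obtain ⟨n, hn⟩ := exists_pow_lt_of_lt_one (div_pos hx0 hDpos) hq1
            refine ⟨n, not_le.mpr ?_⟩
            have hlt : D * q ^ n < dist x y := by
              rw [mul_comm]
              calc q ^ n * D < (dist x y / D) * D := mul_lt_mul_of_pos_right hn hDpos
                _ = dist x y := div_mul_cancel₀ _ (ne_of_gt hDpos)
            simpa [hr] using hlt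
          classical
          set n0 := Nat.find hPex with hn0def
          have hn0 : ¬ dist x y ≤ r n0 := Nat.find_spec hPex
          have hn0ne : n0 ≠ 0 := by
            intro h0
            apply hn0
            rw [h0]
            simpa [hr] using hDlt x y
          obtain ⟨m, hm⟩ := Nat.exists_eq_succ_of_ne_zero hn0ne
          have hmem1 : dist x y ≤ r m := by
            by_contra hcon
            exact Nat.find_min hPex (by omega) hcon
          refine Set.mem_union_right _ (Set.mem_iUnion.mpr ⟨m, ?_, ?_⟩)
          · exact Metric.mem_closedBall.mpr hmem1
          · intro hcon
            exact hn0 (by rw [hm]; exact Metric.mem_closedBall.mp hcon)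
      -- measure bound on balls
      have hBbound : ∀ k, μ (B k) ≤ ENNReal.ofReal (CA' * r k ^ df) := by
        intro k
        cases k with
        | zero =>
          have hr0' : r 0 = D := by simp [hr]
          calc μ (B 0) ≤ μ Set.univ := measure_mono (Set.subset_univ _)
            _ = ENNReal.ofReal M := hμuniv
            _ ≤ ENNReal.ofReal (CA' * r 0 ^ df) := by
                apply ENNReal.ofReal_le_ofReal
                rw [hr0', hCA']
                have : (CA + M / D ^ df) * D ^ df = CA * D ^ df + M := by
                  field_simp
                rw [this]
                nlinarith
        | succ k =>
          have hrlt : r (k + 1) < D := by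
            have : q ^ (k + 1) < 1 := pow_lt_one₀ (le_of_lt hq0) hq1 (Nat.succ_ne_zero k)
            calc r (k + 1) = D * q ^ (k + 1) := rfl
              _ < D * 1 := mul_lt_mul_of_pos_left this hDpos
              _ = D := mul_one D
          have h1 := hA y (r (k + 1)) (le_of_lt (hr0 _)) hrlt
          have h2 : μ (B (k + 1)) = ENNReal.ofReal (μ (B (k + 1))).toReal :=
            (ENNReal.ofReal_toReal (measure_ne_top μ _)).symm
          rw [h2]
          apply ENNReal.ofReal_le_ofReal
          calc (μ (B (k + 1))).toReal ≤ CA * r (k + 1) ^ df := h1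
            _ ≤ CA' * r (k + 1) ^ df := by
                apply mul_le_mul_of_nonneg_right _ (Real.rpow_nonneg (le_of_lt (hr0 _)) _)
                have hnn : 0 ≤ M / D ^ df := div_nonneg hM0 (le_of_lt hDdf)
                rw [hCA']; linarith
      -- per-annulus bound
      have hann : ∀ k, ∫⁻ x in B k \ B (k + 1), ENNReal.ofReal (dist x y ^ e) ∂μ ≤
          ENNReal.ofReal c * ENNReal.ofReal w ^ k := by
        intro k
        have step1 : ∫⁻ x in B k \ B (k + 1), ENNReal.ofReal (dist x y ^ e) ∂μ ≤
            ∫⁻ _x in B k \ B (k + 1), ENNReal.ofReal (r (k + 1) ^ e) ∂μ := by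
          refine setLIntegral_mono measurable_const fun x hx => ?_
          apply ENNReal.ofReal_le_ofReal
          have hxgt : r (k + 1) < dist x y := by
            have := hx.2
            rw [hB] at this
            simpa [Metric.mem_closedBall, not_le] using this
          exact Real.rpow_le_rpow_of_nonpos (hr0 _) (le_of_lt hxgt) (le_of_lt he0)
        have step2 : (∫⁻ _x in B k \ B (k + 1), ENNReal.ofReal (r (k + 1) ^ e) ∂μ) =
            ENNReal.ofReal (r (k + 1) ^ e) * μ (B k \ B (k + 1)) := setLIntegral_const _ _
        have step3 : μ (B k \ B (k + 1)) ≤ ENNReal.ofReal (CA' * r k ^ df) :=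
          le_trans (measure_mono Set.diff_subset) (hBbound k)
        have step4 : ENNReal.ofReal (r (k + 1) ^ e) * ENNReal.ofReal (CA' * r k ^ df) =
            ENNReal.ofReal c * ENNReal.ofReal w ^ k := by
          rw [← ENNReal.ofReal_mul (Real.rpow_nonneg (le_of_lt (hr0 _)) _),
            ← ENNReal.ofReal_pow hw0, ← ENNReal.ofReal_mul hc0]
          congr 1
          have hre : r (k + 1) ^ e = D ^ e * (u * u ^ k) := by
            rw [hr]
            rw [Real.mul_rpow hD0 (le_of_lt (pow_pos hq0 _)), pow_rpow_comm q (le_of_lt hq0),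
              pow_succ, mul_comm (u ^ k) u]
          have hrd : r k ^ df = D ^ df * v ^ k := by
            rw [hr, Real.mul_rpow hD0 (le_of_lt (pow_pos hq0 _)),
              pow_rpow_comm q (le_of_lt hq0)]
          rw [hre, hrd, hc, hw, mul_pow]
          ring
        calc ∫⁻ x in B k \ B (k + 1), ENNReal.ofReal (dist x y ^ e) ∂μ
            ≤ ENNReal.ofReal (r (k + 1) ^ e) * μ (B k \ B (k + 1)) := step1.trans (le_of_eq step2)
          _ ≤ ENNReal.ofReal (r (k + 1) ^ e) * ENNReal.ofReal (CA' * r k ^ df) :=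
              mul_le_mul_right step3 _
          _ = ENNReal.ofReal c * ENNReal.ofReal w ^ k := step4
      -- assemble
      have hwlt1 : ENNReal.ofReal w < 1 := by
        rw [← ENNReal.ofReal_one]
        exact ENNReal.ofReal_lt_ofReal_iff_of_nonneg hw0 |>.mpr hw1
      calc ∫⁻ x, ENNReal.ofReal (dist x y ^ e) ∂μ
          = ∫⁻ x in Set.univ, ENNReal.ofReal (dist x y ^ e) ∂μ := (setLIntegral_univ _).symm
        _ ≤ ∫⁻ x in {y} ∪ ⋃ k, (B k \ B (k + 1)), ENNReal.ofReal (dist x y ^ e) ∂μ :=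
            lintegral_mono_set cover
        _ ≤ (∫⁻ x in ({y} : Set X), ENNReal.ofReal (dist x y ^ e) ∂μ) +
            ∫⁻ x in ⋃ k, (B k \ B (k + 1)), ENNReal.ofReal (dist x y ^ e) ∂μ :=
            lintegral_union_le _ _ _
        _ ≤ 0 + ∑' k, ∫⁻ x in B k \ B (k + 1), ENNReal.ofReal (dist x y ^ e) ∂μ := by
            gcongr
            · rw [lintegral_singleton]
              simp [Real.zero_rpow (ne_of_lt he0)]
            · exact lintegral_iUnion_le _ _
        _ ≤ 0 + ∑' k, ENNReal.ofReal c * ENNReal.ofReal w ^ k := by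
            gcongr with k
            exact hann k
        _ = ENNReal.ofReal c * (1 - ENNReal.ofReal w)⁻¹ := by
            rw [zero_add, ENNReal.tsum_mul_left, ENNReal.tsum_geometric]
        _ = ENNReal.ofReal (c * (1 - w)⁻¹) := by
            rw [ENNReal.ofReal_mul hc0, ENNReal.ofReal_inv_of_pos (by linarith),
              ENNReal.ofReal_sub 1 hw0, ENNReal.ofReal_one]
        _ ≤ ENNReal.ofReal (max 1 (c * (1 - w)⁻¹)) :=
            ENNReal.ofReal_le_ofReal (le_max_right _ _)


/-- The `α`-fractional energy (double lower integral) with kernel exponent `s`. -/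
def fracEnergy {X : Type*} [MetricSpace X] [MeasurableSpace X]
    (μ : Measure X) (s : ℝ) (f : X → ℝ) : ℝ≥0∞ :=
  ∫⁻ x, ∫⁻ y, ENNReal.ofReal ((f x - f y) ^ 2 / dist x y ^ s) ∂μ ∂μ

/-- The squared Sobolev norm `‖f‖_{E_α}² = ‖f‖_{L²}² + E_α(f,f)` (with the `1/2` factor
of the energy form). -/
def sobNormSq {X : Type*} [MetricSpace X] [MeasurableSpace X]
    (μ : Measure X) (s : ℝ) (f : X → ℝ) : ℝ≥0∞ :=
  (∫⁻ x, ENNReal.ofReal ((f x) ^ 2) ∂μ) + 2⁻¹ * fracEnergy μ s f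


private lemma fracEnergy_congr' {X : Type*} [MetricSpace X] [MeasurableSpace X]
    {μ : Measure X} {s : ℝ} {f g : X → ℝ} (hfg : f =ᵐ[μ] g) :
    fracEnergy μ s f = fracEnergy μ s g := by
  refine lintegral_congr_ae ?_
  filter_upwards [hfg] with x hx
  refine lintegral_congr_ae ?_
  filter_upwards [hfg] with y hy
  rw [hx, hy]

private lemma sobNormSq_congr' {X : Type*} [MetricSpace X] [MeasurableSpace X]
    {μ : Measure X} {s : ℝ} {f g : X → ℝ} (hfg : f =ᵐ[μ] g) :
    sobNormSq μ s f = sobNormSq μ s g := by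
  unfold sobNormSq
  rw [fracEnergy_congr' hfg, lintegral_congr_ae (hfg.mono fun x hx => by
    show ENNReal.ofReal (f x ^ 2) = ENNReal.ofReal (g x ^ 2); rw [hx])]

private lemma energy_mul_le {X : Type*} [MetricSpace X] [CompactSpace X] [MeasurableSpace X]
    [BorelSpace X] (μ : Measure X) [IsFiniteMeasure μ]
    (s β K S : ℝ) (H : ℝ≥0) (h g : X → ℝ)
    (hg : Measurable g) (hh : Measurable h)
    (hHol : ∀ x y, |h x - h y| ≤ (H : ℝ) * dist x y ^ β)
    (hS : ∀ x, |h x| ≤ S) (hβ0 : 0 < β)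
    (hK0 : 0 ≤ K) (hK : ∀ y : X, ∫⁻ x, ENNReal.ofReal (dist x y ^ (2 * β - s)) ∂μ ≤ ENNReal.ofReal K) :
    fracEnergy μ s (fun x => h x * g x) ≤
      ENNReal.ofReal (2 * S ^ 2) * fracEnergy μ s g
        + ENNReal.ofReal (2 * (H : ℝ) ^ 2 * K) * ∫⁻ x, ENNReal.ofReal (g x ^ 2) ∂μ := by
  set e : ℝ := 2 * β - s with he
  have hS2 : ∀ x, h x ^ 2 ≤ S ^ 2 := fun x =>
    sq_le_sq' (by linarith [neg_abs_le (h x), hS x]) (by linarith [le_abs_self (h x), hS x])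
  -- pointwise bound
  have key : ∀ x y : X,
      ENNReal.ofReal ((h x * g x - h y * g y) ^ 2 / dist x y ^ s) ≤
        ENNReal.ofReal (2 * S ^ 2 * ((g x - g y) ^ 2 / dist x y ^ s))
          + ENNReal.ofReal (2 * (H : ℝ) ^ 2 * (g y ^ 2 * dist x y ^ e)) := by
    intro x y
    rcases eq_or_ne x y with rfl | hxy
    · simp
    · have hd : 0 < dist x y := dist_pos.mpr hxy
      have hds : 0 < dist x y ^ s := Real.rpow_pos_of_pos hd s
      have hol := hHol x y
      have hhy2 : (h x - h y) ^ 2 ≤ (H : ℝ) ^ 2 * (dist x y ^ β) ^ 2 := by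
        have h1 : |h x - h y| ^ 2 ≤ ((H : ℝ) * dist x y ^ β) ^ 2 :=
          pow_le_pow_left₀ (abs_nonneg _) hol 2
        rw [sq_abs] at h1
        calc (h x - h y) ^ 2 ≤ ((H : ℝ) * dist x y ^ β) ^ 2 := h1
          _ = (H : ℝ) ^ 2 * (dist x y ^ β) ^ 2 := by ring
      have hd2β : (dist x y ^ β) ^ 2 = dist x y ^ (2 * β) := by
        rw [← Real.rpow_natCast (dist x y ^ β) 2, ← Real.rpow_mul dist_nonneg]
        norm_num [mul_comm]
      have key0 : (h x * g x - h y * g y) ^ 2 ≤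
          2 * S ^ 2 * (g x - g y) ^ 2 + 2 * (H : ℝ) ^ 2 * g y ^ 2 * dist x y ^ (2 * β) := by
        rw [← hd2β]
        nlinarith [sq_nonneg (h x * (g x - g y) - g y * (h x - h y)),
          sq_nonneg (g x - g y), sq_nonneg (g y), hS2 x, hhy2,
          mul_le_mul_of_nonneg_right (hS2 x) (sq_nonneg (g x - g y)),
          mul_le_mul_of_nonneg_left hhy2 (sq_nonneg (g y))]
      have split : (2 * S ^ 2 * (g x - g y) ^ 2 +
            2 * (H : ℝ) ^ 2 * g y ^ 2 * dist x y ^ (2 * β)) / dist x y ^ s =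
          2 * S ^ 2 * ((g x - g y) ^ 2 / dist x y ^ s)
            + 2 * (H : ℝ) ^ 2 * (g y ^ 2 * dist x y ^ e) := by
        rw [he, Real.rpow_sub hd]
        field_simp
      have realineq : (h x * g x - h y * g y) ^ 2 / dist x y ^ s ≤
          2 * S ^ 2 * ((g x - g y) ^ 2 / dist x y ^ s)
            + 2 * (H : ℝ) ^ 2 * (g y ^ 2 * dist x y ^ e) := by
        rw [← split]
        gcongr
      have hA0 : 0 ≤ 2 * S ^ 2 * ((g x - g y) ^ 2 / dist x y ^ s) := by positivity
      calc ENNReal.ofReal ((h x * g x - h y * g y) ^ 2 / dist x y ^ s)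
          ≤ ENNReal.ofReal (2 * S ^ 2 * ((g x - g y) ^ 2 / dist x y ^ s)
              + 2 * (H : ℝ) ^ 2 * (g y ^ 2 * dist x y ^ e)) :=
            ENNReal.ofReal_le_ofReal realineq
        _ = _ := ENNReal.ofReal_add hA0 (by positivity)
  -- measurability
  have measa : Measurable (fun p : X × X =>
      ENNReal.ofReal (2 * S ^ 2 * ((g p.1 - g p.2) ^ 2 / dist p.1 p.2 ^ s))) := by fun_prop
  have measb : Measurable (fun p : X × X =>
      ENNReal.ofReal (2 * (H : ℝ) ^ 2 * (g p.2 ^ 2 * dist p.1 p.2 ^ e))) := by fun_prop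
  have meas0 : Measurable (fun p : X × X =>
      ENNReal.ofReal ((g p.1 - g p.2) ^ 2 / dist p.1 p.2 ^ s)) := by fun_prop
  calc fracEnergy μ s (fun x => h x * g x)
      ≤ ∫⁻ x, ∫⁻ y, (ENNReal.ofReal (2 * S ^ 2 * ((g x - g y) ^ 2 / dist x y ^ s))
          + ENNReal.ofReal (2 * (H : ℝ) ^ 2 * (g y ^ 2 * dist x y ^ e))) ∂μ ∂μ :=
        lintegral_mono fun x => lintegral_mono fun y => key x y
    _ = (∫⁻ x, ∫⁻ y, ENNReal.ofReal (2 * S ^ 2 * ((g x - g y) ^ 2 / dist x y ^ s)) ∂μ ∂μ)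
        + ∫⁻ x, ∫⁻ y, ENNReal.ofReal (2 * (H : ℝ) ^ 2 * (g y ^ 2 * dist x y ^ e)) ∂μ ∂μ := by
        rw [← lintegral_add_left (Measurable.lintegral_prod_right
          (f := fun x y => ENNReal.ofReal (2 * S ^ 2 * ((g x - g y) ^ 2 / dist x y ^ s))) measa)]
        refine lintegral_congr fun x => ?_
        exact lintegral_add_left (measa.comp (measurable_prodMk_left)) _
    _ ≤ ENNReal.ofReal (2 * S ^ 2) * fracEnergy μ s g
        + ENNReal.ofReal (2 * (H : ℝ) ^ 2 * K) * ∫⁻ x, ENNReal.ofReal (g x ^ 2) ∂μ := by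
        gcongr ?_ + ?_
        · -- first term
          apply le_of_eq
          have h2S : (0:ℝ) ≤ 2 * S ^ 2 := by positivity
          simp_rw [ENNReal.ofReal_mul h2S]
          rw [fracEnergy]
          rw [← lintegral_const_mul _ (Measurable.lintegral_prod_right
            (f := fun x y => ENNReal.ofReal ((g x - g y) ^ 2 / dist x y ^ s)) meas0)]
          refine lintegral_congr fun x => ?_
          exact lintegral_const_mul _ (by fun_prop : Measurable fun y =>
            ENNReal.ofReal ((g x - g y) ^ 2 / dist x y ^ s))
        · -- second term
          have hswap : (∫⁻ x, ∫⁻ y, ENNReal.ofReal (2 * (H : ℝ) ^ 2 * (g y ^ 2 * dist x y ^ e)) ∂μ ∂μ)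
              = ∫⁻ y, ∫⁻ x, ENNReal.ofReal (2 * (H : ℝ) ^ 2 * (g y ^ 2 * dist x y ^ e)) ∂μ ∂μ :=
            lintegral_lintegral_swap measb.aemeasurable
          rw [hswap]
          have inner_le : ∀ y : X,
              (∫⁻ x, ENNReal.ofReal (2 * (H : ℝ) ^ 2 * (g y ^ 2 * dist x y ^ e)) ∂μ) ≤
                ENNReal.ofReal (2 * (H : ℝ) ^ 2 * K) * ENNReal.ofReal (g y ^ 2) := by
            intro y
            have hrw : ∀ x : X, ENNReal.ofReal (2 * (H : ℝ) ^ 2 * (g y ^ 2 * dist x y ^ e)) =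
                ENNReal.ofReal (2 * (H : ℝ) ^ 2 * g y ^ 2) * ENNReal.ofReal (dist x y ^ e) := by
              intro x
              rw [← ENNReal.ofReal_mul (by positivity)]
              ring_nf
            simp_rw [hrw]
            rw [lintegral_const_mul _ (by fun_prop)]
            calc ENNReal.ofReal (2 * (H : ℝ) ^ 2 * g y ^ 2) *
                  ∫⁻ x, ENNReal.ofReal (dist x y ^ e) ∂μ
                ≤ ENNReal.ofReal (2 * (H : ℝ) ^ 2 * g y ^ 2) * ENNReal.ofReal K :=
                  mul_le_mul_right (hK y) _
              _ = ENNReal.ofReal (2 * (H : ℝ) ^ 2 * K) * ENNReal.ofReal (g y ^ 2) := by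
                  rw [← ENNReal.ofReal_mul (by positivity),
                    ← ENNReal.ofReal_mul (mul_nonneg (by positivity) hK0)]
                  ring_nf
          calc (∫⁻ y, ∫⁻ x, ENNReal.ofReal (2 * (H : ℝ) ^ 2 * (g y ^ 2 * dist x y ^ e)) ∂μ ∂μ)
              ≤ ∫⁻ y, ENNReal.ofReal (2 * (H : ℝ) ^ 2 * K) * ENNReal.ofReal (g y ^ 2) ∂μ :=
                lintegral_mono fun y => inner_le y
            _ = ENNReal.ofReal (2 * (H : ℝ) ^ 2 * K) * ∫⁻ y, ENNReal.ofReal (g y ^ 2) ∂μ :=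
                lintegral_const_mul _ (by fun_prop)

/-- For `0<α<β≤1`, the `α`-fractional Sobolev space is a Banach module over
`Höl_β(X,d)`: `h·f ∈ H_α` with `‖hf‖_{E_α} ≤ C‖h‖_{Höl_β}‖f‖_{E_α}`. -/
theorem statement6
    {X : Type*} [MetricSpace X] [CompactSpace X] [MeasurableSpace X] [BorelSpace X]
    (μ : Measure X) [IsFiniteMeasure μ]
    (df : ℝ) (hdf : 0 < df) (CA : ℝ) (hCA : 1 ≤ CA)
    (hAhlfors : ∀ (x : X) (r : ℝ), 0 ≤ r → r < Metric.diam (Set.univ : Set X) →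
      CA⁻¹ * r ^ df ≤ (μ (Metric.closedBall x r)).toReal ∧
        (μ (Metric.closedBall x r)).toReal ≤ CA * r ^ df)
    (α β : ℝ) (hα0 : 0 < α) (hαβ : α < β) (hβ : β ≤ 1) :
    ∃ C : ℝ, 0 < C ∧ ∀ (h f : X → ℝ) (H : ℝ≥0) (S : ℝ),
      HolderWith H β.toNNReal h → (∀ x, |h x| ≤ S) →
      MemLp f 2 μ → fracEnergy μ (df + 2 * α) f < ⊤ →
      MemLp (fun x => h x * f x) 2 μ ∧
      fracEnergy μ (df + 2 * α) (fun x => h x * f x) < ⊤ ∧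
      sobNormSq μ (df + 2 * α) (fun x => h x * f x) ≤
        ENNReal.ofReal (C ^ 2 * (S + (H : ℝ)) ^ 2) * sobNormSq μ (df + 2 * α) f := by
  rcases isEmpty_or_nonempty X with hX | hX
  · -- empty space : everything is trivial
    have hμ0 : μ = 0 := by
      ext t ht
      have : t = (∅ : Set X) := Set.eq_empty_of_isEmpty t
      simp [this]
    subst hμ0
    refine ⟨1, one_pos, fun h f H S hH hS hf2 hfE => ?_⟩
    refine ⟨⟨aestronglyMeasurable_zero_measure _, by simp⟩, ?_, ?_⟩
    · simp [fracEnergy]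
    · simp [sobNormSq, fracEnergy]
  · -- main case
    set s : ℝ := df + 2 * α with hs
    have hβ0 : (0:ℝ) < β := lt_trans hα0 hαβ
    obtain ⟨K, hK1, hKb⟩ := kernel_bound μ df hdf CA hCA
      (fun x r hr hrD => (hAhlfors x r hr hrD).2) (2 * β - s)
      (by rw [hs]; linarith)
    have hK0 : (0:ℝ) ≤ K := by linarith
    refine ⟨Real.sqrt (2 * K), Real.sqrt_pos.mpr (by linarith), fun h f H S hH hS hf2 hfE => ?_⟩
    have hC2 : Real.sqrt (2 * K) ^ 2 = 2 * K := Real.sq_sqrt (by linarith)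
    have hS0 : (0:ℝ) ≤ S := le_trans (abs_nonneg _) (hS (Classical.arbitrary X))
    have hH0 : (0:ℝ) ≤ (H : ℝ) := H.coe_nonneg
    -- h is continuous, hence measurable
    have hh_cont : Continuous h := hH.continuous (by
      rw [← Real.toNNReal_pos] at hβ0
      exact hβ0)
    have hh_meas : Measurable h := hh_cont.measurable
    -- Hölder estimate in real form
    have hHol : ∀ x y : X, |h x - h y| ≤ (H : ℝ) * dist x y ^ β := by
      intro x y
      have := hH.dist_le x y
      rwa [Real.dist_eq, Real.coe_toNNReal β (le_of_lt (lt_trans hα0 hαβ))] at this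
    -- measurable representative of f
    obtain ⟨g, hgsm, hfg⟩ : ∃ g : X → ℝ, StronglyMeasurable g ∧ f =ᵐ[μ] g :=
      ⟨hf2.aestronglyMeasurable.mk f, hf2.aestronglyMeasurable.stronglyMeasurable_mk,
        hf2.aestronglyMeasurable.ae_eq_mk⟩
    have hgmeas : Measurable g := hgsm.measurable
    have hg2 : MemLp g 2 μ := hf2.ae_eq hfg
    have hgE : fracEnergy μ s g < ⊤ := fracEnergy_congr' hfg ▸ hfE
    have hfg' : (fun x => h x * f x) =ᵐ[μ] fun x => h x * g x :=
      hfg.mono fun x hx => by show h x * f x = h x * g x; rw [hx]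
    -- L² membership of the product
    have hmem : MemLp (fun x => h x * g x) 2 μ := by
      refine (hg2.const_mul S).of_le
        ((hh_meas.mul hgmeas).aestronglyMeasurable) (Filter.Eventually.of_forall fun x => ?_)
      rw [Real.norm_eq_abs, Real.norm_eq_abs, abs_mul, abs_mul]
      exact mul_le_mul_of_nonneg_right (le_trans (hS x) (le_abs_self S)) (abs_nonneg _)
    have hmemf : MemLp (fun x => h x * f x) 2 μ := hmem.ae_eq hfg'.symm
    -- L² integrals
    set L : ℝ≥0∞ := ∫⁻ x, ENNReal.ofReal (g x ^ 2) ∂μ with hL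
    have hLfin : L < ⊤ := lt_of_le_of_lt
      (lintegral_ofReal_le_lintegral_enorm _) hg2.integrable_sq.2
    -- energy estimate
    have hE := energy_mul_le μ s β K S H h g hgmeas hh_meas hHol hS hβ0 hK0 hKb
    -- L² estimate for the product
    have hS2 : ∀ x, h x ^ 2 ≤ S ^ 2 := fun x =>
      sq_le_sq' (by linarith [neg_abs_le (h x), hS x]) (by linarith [le_abs_self (h x), hS x])
    have hLprod : (∫⁻ x, ENNReal.ofReal ((h x * g x) ^ 2) ∂μ) ≤ ENNReal.ofReal (S ^ 2) * L := by
      rw [hL, ← lintegral_const_mul _ (by fun_prop : Measurable fun x =>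
        ENNReal.ofReal (g x ^ 2))]
      refine lintegral_mono fun x => ?_
      rw [← ENNReal.ofReal_mul (sq_nonneg S)]
      apply ENNReal.ofReal_le_ofReal
      have : (h x * g x) ^ 2 = h x ^ 2 * g x ^ 2 := by ring
      rw [this]
      exact mul_le_mul_of_nonneg_right (hS2 x) (sq_nonneg _)
    -- finiteness of the product energy
    have hEfin : fracEnergy μ s (fun x => h x * g x) < ⊤ := by
      refine lt_of_le_of_lt hE (ENNReal.add_lt_top.mpr ⟨?_, ?_⟩)
      · exact ENNReal.mul_lt_top ENNReal.ofReal_lt_top hgE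
      · exact ENNReal.mul_lt_top ENNReal.ofReal_lt_top hLfin
    refine ⟨hmemf, by rwa [fracEnergy_congr' hfg'], ?_⟩
    -- the quantitative bound
    rw [sobNormSq_congr' hfg', sobNormSq_congr' hfg]
    set E : ℝ≥0∞ := fracEnergy μ s g with hEdef
    have hhalf : ∀ a : ℝ, (2⁻¹ : ℝ≥0∞) * ENNReal.ofReal (2 * a) = ENNReal.ofReal a := by
      intro a
      rw [ENNReal.ofReal_mul (by norm_num : (0:ℝ) ≤ 2), ENNReal.ofReal_ofNat, ← mul_assoc,
        ENNReal.inv_mul_cancel (by norm_num) (by norm_num), one_mul]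
    have expand : (2⁻¹ : ℝ≥0∞) * (ENNReal.ofReal (2 * S ^ 2) * E
          + ENNReal.ofReal (2 * (H : ℝ) ^ 2 * K) * L)
        = ENNReal.ofReal (S ^ 2) * E + ENNReal.ofReal ((H : ℝ) ^ 2 * K) * L := by
      rw [show 2 * (H : ℝ) ^ 2 * K = 2 * ((H : ℝ) ^ 2 * K) by ring]
      rw [mul_add, ← mul_assoc, ← mul_assoc, hhalf, hhalf]
    have r1 : S ^ 2 + (H : ℝ) ^ 2 * K ≤ 2 * K * (S + (H : ℝ)) ^ 2 := by
      nlinarith [mul_nonneg (mul_nonneg hK0 hS0) hH0, mul_nonneg hK0 (sq_nonneg S),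
        mul_nonneg hK0 (sq_nonneg (H : ℝ)), mul_nonneg (sub_nonneg.mpr hK1) (sq_nonneg S),
        mul_nonneg (sub_nonneg.mpr hK1) (sq_nonneg (H : ℝ))]
    have r2 : S ^ 2 ≤ K * (S + (H : ℝ)) ^ 2 := by
      nlinarith [mul_nonneg (mul_nonneg hK0 hS0) hH0, mul_nonneg hK0 (sq_nonneg (H : ℝ)),
        mul_nonneg (sub_nonneg.mpr hK1) (sq_nonneg S)]
    have hfinal : ENNReal.ofReal (2 * K * (S + (H : ℝ)) ^ 2) * 2⁻¹
        = ENNReal.ofReal (K * (S + (H : ℝ)) ^ 2) := by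
      rw [mul_comm, show 2 * K * (S + (H : ℝ)) ^ 2 = 2 * (K * (S + (H : ℝ)) ^ 2) by ring, hhalf]
    calc sobNormSq μ s (fun x => h x * g x)
        = (∫⁻ x, ENNReal.ofReal ((h x * g x) ^ 2) ∂μ)
            + 2⁻¹ * fracEnergy μ s (fun x => h x * g x) := rfl
      _ ≤ ENNReal.ofReal (S ^ 2) * L + 2⁻¹ * (ENNReal.ofReal (2 * S ^ 2) * E
            + ENNReal.ofReal (2 * (H : ℝ) ^ 2 * K) * L) := by
          gcongr
      _ = ENNReal.ofReal (S ^ 2 + (H : ℝ) ^ 2 * K) * L + ENNReal.ofReal (S ^ 2) * E := by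
          rw [expand, ENNReal.ofReal_add (sq_nonneg S) (mul_nonneg (sq_nonneg _) hK0)]
          ring
      _ ≤ ENNReal.ofReal (2 * K * (S + (H : ℝ)) ^ 2) * L
            + ENNReal.ofReal (K * (S + (H : ℝ)) ^ 2) * E :=
          add_le_add (mul_le_mul_left (ENNReal.ofReal_le_ofReal r1) _)
            (mul_le_mul_left (ENNReal.ofReal_le_ofReal r2) _)
      _ = ENNReal.ofReal (2 * K * (S + (H : ℝ)) ^ 2) * (L + 2⁻¹ * E) := by
          rw [mul_add, ← mul_assoc, hfinal]
      _ = ENNReal.ofReal (Real.sqrt (2 * K) ^ 2 * (S + (H : ℝ)) ^ 2) * sobNormSq μ s g := by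
          rw [hC2]
          rfl
end
end

section
/- Let X be a compact abelian group with an invariant metric d and normalized Haar measure μ that is Ahlfors d_f-regular, and suppose every character of X is Lipschitz continuous. Fix 0<2α<1 and for a character φ of X define ℓ^α(φ) := ∫_X (1 − φ(y))/d(1_X,y)^{d_f+2α} dμ(y) (the integral converges absolutely). Then: (i) ℓ^α(φ) is a nonnegative real number, and ℓ^α(φ)=0 if and only if φ is the trivial character; (ii) ℓ^α(φ⁻¹)=ℓ^α(φ) for every character φ; and (iii) there is a constant C such that |ℓ^α(φψ) − ℓ^α(ψ)| ≤ C·Höl_1(φ) for all characters φ,ψ, where Höl_1(φ) is the Lipschitz constant of φ. -/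
open MeasureTheory Metric ENNReal NNReal

noncomputable section

/-- A (unitary) character of a compact group: a continuous multiplicative homomorphism
into the unit circle of `ℂ`. -/
def IsChar {X : Type*} [Monoid X] [TopologicalSpace X] (φ : X → ℂ) : Prop :=
  Continuous φ ∧ (∀ x y : X, φ (x * y) = φ x * φ y) ∧ ∀ x : X, ‖φ x‖ = 1

/-- The value `ℓ^α(φ) = ∫ (1 − φ(y))/d(1,y)^{d_f+2α} dμ(y)`, the eigenvalue of the
fractional Dirichlet Laplacian at the character `φ`. -/
def ellAlpha {X : Type*} [MetricSpace X] [One X] [MeasurableSpace X]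
    (μ : Measure X) (s : ℝ) (φ : X → ℂ) : ℂ :=
  ∫ y, (1 - φ y) / ((dist (1 : X) y ^ s : ℝ) : ℂ) ∂μ

lemma isChar_map_one {X : Type*} [Monoid X] [TopologicalSpace X] {φ : X → ℂ}
    (hφ : IsChar φ) : φ 1 = 1 := by
  have h : φ 1 = φ 1 * φ 1 := by rw [← hφ.2.1, one_mul]
  have hne : φ 1 ≠ 0 := by
    intro h0
    have := hφ.2.2 1
    rw [h0] at this
    simp at this
  exact mul_left_cancel₀ hne (h.symm.trans (mul_one (φ 1)).symm)

lemma isChar_map_inv {X : Type*} [Group X] [TopologicalSpace X] {φ : X → ℂ}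
    (hφ : IsChar φ) (y : X) : φ y⁻¹ = (φ y)⁻¹ := by
  refine eq_inv_of_mul_eq_one_left ?_
  rw [← hφ.2.1, inv_mul_cancel, isChar_map_one hφ]

/-- The key pointwise bound on the integrand in terms of the Lipschitz constant. -/
lemma char_norm_div_le {X : Type*} [MetricSpace X] [Monoid X] {φ : X → ℂ}
    (hφ : IsChar φ) {K : ℝ≥0} (hK : LipschitzWith K φ) (s : ℝ) (y : X) :
    ‖(1 - φ y) / ((dist (1 : X) y ^ s : ℝ) : ℂ)‖ ≤ (K : ℝ) * dist (1 : X) y ^ (1 - s) := by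
  by_cases hy : dist (1 : X) y = 0
  · have hy1 : y = 1 := (dist_eq_zero.mp hy).symm
    rw [hy1, isChar_map_one hφ]
    have h0 : (1 : ℂ) - 1 = 0 := by ring
    rw [h0, zero_div, norm_zero]
    positivity
  · have hd : 0 < dist (1 : X) y := lt_of_le_of_ne dist_nonneg (Ne.symm hy)
    have h1 : ‖(1 - φ y) / ((dist (1 : X) y ^ s : ℝ) : ℂ)‖
        = ‖1 - φ y‖ / dist (1 : X) y ^ s := by
      rw [norm_div, Complex.norm_real, Real.norm_of_nonneg (Real.rpow_nonneg dist_nonneg s)]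
    rw [h1]
    have h2 : ‖1 - φ y‖ ≤ (K : ℝ) * dist (1 : X) y := by
      calc ‖1 - φ y‖ = dist (φ 1) (φ y) := by rw [dist_eq_norm, isChar_map_one hφ]
        _ ≤ (K : ℝ) * dist (1 : X) y := hK.dist_le_mul 1 y
    have h3 : dist (1 : X) y ^ (1 - s) = dist (1 : X) y / dist (1 : X) y ^ s := by
      rw [Real.rpow_sub hd, Real.rpow_one]
    have hpos : 0 < dist (1 : X) y ^ s := Real.rpow_pos_of_pos hd s
    calc ‖1 - φ y‖ / dist (1 : X) y ^ s
        ≤ ((K : ℝ) * dist (1 : X) y) / dist (1 : X) y ^ s := by gcongr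
      _ = (K : ℝ) * dist (1 : X) y ^ (1 - s) := by rw [mul_div_assoc, ← h3]

/-- Integrability of `y ↦ d(x₀,y)^t` on an Ahlfors-regular compact metric measure space,
provided `df + t > 0`. -/
lemma key_integrable {X : Type*} [MetricSpace X] [CompactSpace X]
    [MeasurableSpace X] [BorelSpace X]
    (μ : Measure X) [IsProbabilityMeasure μ] (x0 : X) (df CA : ℝ) (hCA : 1 ≤ CA)
    (hAhl : ∀ r : ℝ, 0 ≤ r → r < Metric.diam (Set.univ : Set X) →
      (μ (Metric.closedBall x0 r)).toReal ≤ CA * r ^ df)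
    (t : ℝ) (ht : 0 < df + t) :
    Integrable (fun y => dist x0 y ^ t) μ := by
  classical
  have hmeas : Measurable (fun y : X => dist x0 y ^ t) :=
    ((continuous_const.dist continuous_id).measurable).pow measurable_const
  have hnn : ∀ y : X, 0 ≤ dist x0 y ^ t := fun y => Real.rpow_nonneg dist_nonneg t
  set D := Metric.diam (Set.univ : Set X) with hDdef
  have hdy : ∀ y : X, dist x0 y ≤ D := fun y =>
    Metric.dist_le_diam_of_mem isBounded_of_compactSpace (Set.mem_univ _) (Set.mem_univ _)
  rcases le_or_gt 0 t with h0 | h0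
  · refine (integrable_const (D ^ t)).mono' hmeas.aestronglyMeasurable (ae_of_all _ fun y => ?_)
    rw [Real.norm_of_nonneg (hnn y)]
    exact Real.rpow_le_rpow dist_nonneg (hdy y) h0
  · have htne : t ≠ 0 := ne_of_lt h0
    rcases le_or_gt D 0 with hD | hD
    · have hzero : (fun y : X => dist x0 y ^ t) = fun _ => (0 : ℝ) := by
        funext y
        have hdz : dist x0 y = 0 := le_antisymm ((hdy y).trans hD) dist_nonneg
        rw [hdz, Real.zero_rpow htne]
      rw [hzero]; exact integrable_const 0
    · -- main case: D > 0 and t < 0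
      set w : ℝ := 1 / 2 with hw
      have hw0 : (0 : ℝ) < w := by norm_num
      have hw1 : w < 1 := by norm_num
      set r : ℕ → ℝ := fun n => D * w ^ n with hr
      have hrpos : ∀ n, 0 < r n := fun n => mul_pos hD (pow_pos hw0 n)
      have hrlt : ∀ n, r (n + 1) < D := by
        intro n
        have hwn : w ^ (n + 1) < 1 := pow_lt_one₀ hw0.le hw1 (Nat.succ_ne_zero n)
        have : D * w ^ (n + 1) < D * 1 := by
          exact mul_lt_mul_of_pos_left hwn hD
        simpa using this
      have hDdf : 0 < D ^ df := Real.rpow_pos_of_pos hD df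
      obtain ⟨CA', hCA'⟩ : ∃ x : ℝ, x = CA + (D ^ df)⁻¹ := ⟨_, rfl⟩
      have hCA'pos : 0 < CA' := by rw [hCA']; positivity
      have hball : ∀ n, μ (Metric.closedBall x0 (r n)) ≤ ENNReal.ofReal (CA' * r n ^ df) := by
        intro n
        cases n with
        | zero =>
          have h1 : r 0 = D := by simp [hr]
          have hone : (1 : ℝ) ≤ CA' * r 0 ^ df := by
            rw [h1, hCA']
            have hmul : (D ^ df)⁻¹ * D ^ df = 1 := inv_mul_cancel₀ (ne_of_gt hDdf)
            nlinarith [hDdf, hCA]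
          calc μ (Metric.closedBall x0 (r 0)) ≤ 1 := prob_le_one
            _ ≤ ENNReal.ofReal (CA' * r 0 ^ df) := by
                rw [← ENNReal.ofReal_one]; exact ENNReal.ofReal_le_ofReal hone
        | succ m =>
          have h1 := hAhl (r (m + 1)) (hrpos _).le (hrlt m)
          have h2 : (μ (Metric.closedBall x0 (r (m + 1)))).toReal ≤ CA' * r (m + 1) ^ df := by
            refine h1.trans ?_
            have hnn' : 0 ≤ r (m + 1) ^ df := Real.rpow_nonneg (hrpos _).le df
            have h4 : CA' * r (m + 1) ^ df
                = CA * r (m + 1) ^ df + (D ^ df)⁻¹ * r (m + 1) ^ df := by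
              rw [hCA']; ring
            have h5 : 0 ≤ (D ^ df)⁻¹ * r (m + 1) ^ df :=
              mul_nonneg (inv_nonneg.mpr hDdf.le) hnn'
            linarith
          calc μ (Metric.closedBall x0 (r (m + 1)))
              = ENNReal.ofReal (μ (Metric.closedBall x0 (r (m + 1)))).toReal :=
                (ENNReal.ofReal_toReal (measure_ne_top μ _)).symm
            _ ≤ ENNReal.ofReal (CA' * r (m + 1) ^ df) := ENNReal.ofReal_le_ofReal h2
      set A : ℕ → Set X := fun n =>
        Metric.closedBall x0 (r n) \ Metric.closedBall x0 (r (n + 1)) with hA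
      have hcover : ({x0}ᶜ : Set X) ⊆ ⋃ n, A n := by
        intro y hy
        have hyx : y ≠ x0 := by simpa using hy
        have hd0 : 0 < dist x0 y := dist_pos.mpr (Ne.symm hyx)
        have hex : ∃ n, r (n + 1) < dist x0 y := by
          obtain ⟨n, hn⟩ := exists_pow_lt_of_lt_one (div_pos hd0 hD) hw1
          refine ⟨n, ?_⟩
          have h1 : w ^ (n + 1) ≤ w ^ n := pow_le_pow_of_le_one hw0.le hw1.le (Nat.le_succ n)
          have h2 : w ^ n * D < dist x0 y := (lt_div_iff₀ hD).mp hn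
          calc r (n + 1) = D * w ^ (n + 1) := rfl
            _ ≤ D * w ^ n := by nlinarith
            _ < dist x0 y := by nlinarith
        obtain ⟨n, h1, h2⟩ : ∃ n, r (n + 1) < dist x0 y ∧ dist x0 y ≤ r n := by
          refine ⟨Nat.find hex, Nat.find_spec hex, ?_⟩
          rcases Nat.eq_zero_or_pos (Nat.find hex) with hz | hpos
          · rw [hz]; simpa [hr] using hdy y
          · have hmin := Nat.find_min hex (Nat.sub_lt hpos Nat.one_pos)
            have heq : Nat.find hex - 1 + 1 = Nat.find hex := Nat.succ_pred_eq_of_pos hpos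
            rw [heq] at hmin
            exact le_of_not_gt hmin
        refine Set.mem_iUnion.mpr ⟨n, ?_, ?_⟩
        · exact Metric.mem_closedBall'.mpr h2
        · intro hmem
          have := Metric.mem_closedBall'.mp hmem
          linarith
      set e : ℝ := df + t with he
      set q : ℝ := w ^ e with hq
      have hq0 : 0 < q := Real.rpow_pos_of_pos hw0 e
      have hq1 : q < 1 := Real.rpow_lt_one hw0.le hw1 ht
      set c : ℝ := w ^ t * CA' * D ^ e with hc
      have hc0 : 0 ≤ c := by positivity
      have halg : ∀ n, r (n + 1) ^ t * (CA' * r n ^ df) = c * q ^ n := by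
        intro n
        have h1 : r (n + 1) = r n * w := by
          show D * w ^ (n + 1) = D * w ^ n * w
          rw [pow_succ]; ring
        rw [h1, Real.mul_rpow (hrpos n).le hw0.le]
        have h2 : r n ^ t * r n ^ df = r n ^ e := by
          rw [he, add_comm df t, ← Real.rpow_add (hrpos n)]
        have h3 : r n ^ e = D ^ e * q ^ n := by
          show (D * w ^ n) ^ e = D ^ e * q ^ n
          rw [Real.mul_rpow hD.le (pow_nonneg hw0.le n), ← Real.rpow_natCast w n,
            ← Real.rpow_mul hw0.le, mul_comm (n : ℝ) e, Real.rpow_mul hw0.le,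
            Real.rpow_natCast, hq]
        calc r n ^ t * w ^ t * (CA' * r n ^ df)
            = w ^ t * CA' * (r n ^ t * r n ^ df) := by ring
          _ = w ^ t * CA' * (D ^ e * q ^ n) := by rw [h2, h3]
          _ = c * q ^ n := by rw [hc]; ring
      have hAn : ∀ n, ∫⁻ y in A n, ENNReal.ofReal (dist x0 y ^ t) ∂μ
          ≤ ENNReal.ofReal (c * q ^ n) := by
        intro n
        have hAmeas : MeasurableSet (A n) :=
          measurableSet_closedBall.diff measurableSet_closedBall
        calc ∫⁻ y in A n, ENNReal.ofReal (dist x0 y ^ t) ∂μ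
            ≤ ∫⁻ _ in A n, ENNReal.ofReal (r (n + 1) ^ t) ∂μ := by
              refine setLIntegral_mono' hAmeas fun y hy => ?_
              refine ENNReal.ofReal_le_ofReal ?_
              have h1 : r (n + 1) < dist x0 y :=
                lt_of_not_ge fun h => hy.2 (Metric.mem_closedBall'.mpr h)
              exact Real.rpow_le_rpow_of_nonpos (hrpos (n + 1)) h1.le h0.le
          _ = ENNReal.ofReal (r (n + 1) ^ t) * μ (A n) := setLIntegral_const _ _
          _ ≤ ENNReal.ofReal (r (n + 1) ^ t) * ENNReal.ofReal (CA' * r n ^ df) := by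
              gcongr
              exact (measure_mono Set.diff_subset).trans (hball n)
          _ = ENNReal.ofReal (r (n + 1) ^ t * (CA' * r n ^ df)) :=
              (ENNReal.ofReal_mul (Real.rpow_nonneg (hrpos _).le t)).symm
          _ = ENNReal.ofReal (c * q ^ n) := by rw [halg n]
      have hSummable : Summable (fun n : ℕ => c * q ^ n) :=
        (summable_geometric_of_lt_one hq0.le hq1).mul_left c
      have htot : ∫⁻ y, ENNReal.ofReal (dist x0 y ^ t) ∂μ < ⊤ := by
        rw [← lintegral_add_compl (fun y => ENNReal.ofReal (dist x0 y ^ t))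
          (measurableSet_singleton x0)]
        have h1 : ∫⁻ y in ({x0} : Set X), ENNReal.ofReal (dist x0 y ^ t) ∂μ = 0 := by
          rw [lintegral_singleton]
          simp [Real.zero_rpow htne]
        have h2 : ∫⁻ y in ({x0}ᶜ : Set X), ENNReal.ofReal (dist x0 y ^ t) ∂μ
            ≤ ∑' n, ENNReal.ofReal (c * q ^ n) :=
          le_trans (lintegral_mono_set hcover)
            (le_trans (lintegral_iUnion_le A _) (ENNReal.tsum_le_tsum hAn))
        have h3 : ∑' n, ENNReal.ofReal (c * q ^ n) < ⊤ := by
          rw [← ENNReal.ofReal_tsum_of_nonneg (fun n => by positivity) hSummable]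
          exact ENNReal.ofReal_lt_top
        calc ∫⁻ y in ({x0} : Set X), ENNReal.ofReal (dist x0 y ^ t) ∂μ
              + ∫⁻ y in ({x0}ᶜ : Set X), ENNReal.ofReal (dist x0 y ^ t) ∂μ
            ≤ 0 + ∑' n, ENNReal.ofReal (c * q ^ n) := by
              rw [h1]; exact add_le_add le_rfl h2
          _ < ⊤ := by rw [zero_add]; exact h3
      exact ⟨hmeas.aestronglyMeasurable,
        (hasFiniteIntegral_iff_ofReal (ae_of_all _ hnn)).mpr htot⟩

/-- On a compact abelian metric group with Ahlfors regular Haar measure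
whose characters are Lipschitz, `ℓ^α` is a proper translation summable-type function:
it is nonnegative real, vanishes exactly at the trivial character, is symmetric under
inversion, and satisfies `|ℓ^α(φψ) − ℓ^α(ψ)| ≤ C·Höl₁(φ)`. -/
theorem statement18
    {X : Type*} [MetricSpace X] [CompactSpace X] [CommGroup X]
    [MeasurableSpace X] [BorelSpace X]
    -- the metric is bi-invariant and inversion-invariant
    (hdinv : ∀ a x y : X, dist (a * x) (a * y) = dist x y)
    (hdinv' : ∀ x y : X, dist x⁻¹ y⁻¹ = dist x y)
    -- normalized Haar measure
    (μ : Measure X) [IsProbabilityMeasure μ] [μ.IsMulLeftInvariant]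
    [μ.IsInvInvariant] [μ.IsOpenPosMeasure]
    (df : ℝ) (hdf : 0 < df) (CA : ℝ) (hCA : 1 ≤ CA)
    (hAhlfors : ∀ (x : X) (r : ℝ), 0 ≤ r → r < Metric.diam (Set.univ : Set X) →
      CA⁻¹ * r ^ df ≤ (μ (Metric.closedBall x r)).toReal ∧
        (μ (Metric.closedBall x r)).toReal ≤ CA * r ^ df)
    -- every character of `X` is Lipschitz continuous
    (hLip : ∀ φ : X → ℂ, IsChar φ → ∃ K : ℝ≥0, LipschitzWith K φ)
    (α : ℝ) (hα0 : 0 < α) (hα1 : 2 * α < 1) :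
    -- (i) absolute convergence; `ℓ^α(φ)` is a nonnegative real, zero iff `φ` is trivial
    (∀ φ : X → ℂ, IsChar φ →
      Integrable (fun y => (1 - φ y) / ((dist (1 : X) y ^ (df + 2 * α) : ℝ) : ℂ)) μ ∧
      (ellAlpha μ (df + 2 * α) φ).im = 0 ∧
      0 ≤ (ellAlpha μ (df + 2 * α) φ).re ∧
      (ellAlpha μ (df + 2 * α) φ = 0 ↔ ∀ x : X, φ x = 1)) ∧
    -- (ii) symmetry under inversion
    (∀ φ : X → ℂ, IsChar φ →
      ellAlpha μ (df + 2 * α) (fun x => (φ x)⁻¹) = ellAlpha μ (df + 2 * α) φ) ∧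
    -- (iii) translation boundedness
    (∃ C : ℝ, 0 < C ∧ ∀ φ ψ : X → ℂ, IsChar φ → IsChar ψ →
      ∀ K : ℝ≥0, LipschitzWith K φ →
        ‖ellAlpha μ (df + 2 * α) (fun x => φ x * ψ x) -
            ellAlpha μ (df + 2 * α) ψ‖ ≤ C * (K : ℝ)) := by
  haveI : MeasurableInv X := ⟨(Isometry.of_dist_eq hdinv').continuous.measurable⟩
  set s : ℝ := df + 2 * α with hs
  have hkey : Integrable (fun y => dist (1 : X) y ^ (1 - s)) μ := by
    refine key_integrable μ 1 df CA hCA (fun r hr hrD => (hAhlfors 1 r hr hrD).2) (1 - s) ?_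
    rw [hs]; linarith
  have hd1inv : ∀ y : X, dist (1 : X) y⁻¹ = dist (1 : X) y := by
    intro y
    have := hdinv' 1 y
    rwa [inv_one] at this
  have hInt : ∀ φ : X → ℂ, IsChar φ →
      Integrable (fun y => (1 - φ y) / ((dist (1 : X) y ^ s : ℝ) : ℂ)) μ := by
    intro φ hφ
    obtain ⟨K, hK⟩ := hLip φ hφ
    have hmeas : AEStronglyMeasurable
        (fun y => (1 - φ y) / ((dist (1 : X) y ^ s : ℝ) : ℂ)) μ := by
      refine Measurable.aestronglyMeasurable (Measurable.div ?_ ?_)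
      · exact (continuous_const.sub hφ.1).measurable
      · exact Complex.measurable_ofReal.comp
          (((continuous_const.dist continuous_id).measurable).pow measurable_const)
    exact (hkey.const_mul (K : ℝ)).mono' hmeas
      (ae_of_all _ fun y => char_norm_div_le hφ hK s y)
  have hflip : ∀ φ : X → ℂ, IsChar φ → ∀ y : X,
      (1 - φ y⁻¹) / ((dist (1 : X) y⁻¹ ^ s : ℝ) : ℂ)
        = (1 - (φ y)⁻¹) / ((dist (1 : X) y ^ s : ℝ) : ℂ) := by
    intro φ hφ y
    rw [isChar_map_inv hφ, hd1inv]
  have hInvEq : ∀ φ : X → ℂ, IsChar φ →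
      ellAlpha μ s (fun x => (φ x)⁻¹) = ellAlpha μ s φ := by
    intro φ hφ
    unfold ellAlpha
    rw [← integral_inv_eq_self (fun y => (1 - φ y) / ((dist (1 : X) y ^ s : ℝ) : ℂ)) μ]
    refine integral_congr_ae (ae_of_all _ fun y => ?_)
    exact (hflip φ hφ y).symm
  have hconj : ∀ φ : X → ℂ, IsChar φ →
      (starRingEnd ℂ) (ellAlpha μ s φ) = ellAlpha μ s φ := by
    intro φ hφ
    calc (starRingEnd ℂ) (ellAlpha μ s φ)
        = ∫ y, (starRingEnd ℂ) ((1 - φ y) / ((dist (1 : X) y ^ s : ℝ) : ℂ)) ∂μ :=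
          integral_conj.symm
      _ = ellAlpha μ s (fun x => (φ x)⁻¹) := by
          unfold ellAlpha
          refine integral_congr_ae (ae_of_all _ fun y => ?_)
          show (starRingEnd ℂ) ((1 - φ y) / ((dist (1 : X) y ^ s : ℝ) : ℂ))
            = (1 - (φ y)⁻¹) / ((dist (1 : X) y ^ s : ℝ) : ℂ)
          rw [map_div₀, map_sub, map_one, Complex.conj_ofReal,
            ← Complex.inv_eq_conj (hφ.2.2 y)]
      _ = ellAlpha μ s φ := hInvEq φ hφ
  have hre_eq : ∀ φ : X → ℂ, IsChar φ →
      (ellAlpha μ s φ).re = ∫ y, (1 - (φ y).re) / dist (1 : X) y ^ s ∂μ := by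
    intro φ hφ
    have h := integral_re (hInt φ hφ)
    simp only [RCLike.re_to_complex] at h
    rw [ellAlpha, ← h]
    refine integral_congr_ae (ae_of_all _ fun y => ?_)
    show ((1 - φ y) / ((dist (1 : X) y ^ s : ℝ) : ℂ)).re
      = (1 - (φ y).re) / dist (1 : X) y ^ s
    rw [Complex.div_ofReal_re, Complex.sub_re, Complex.one_re]
  have hre_nonneg : ∀ φ : X → ℂ, IsChar φ → ∀ y : X,
      0 ≤ (1 - (φ y).re) / dist (1 : X) y ^ s := by
    intro φ hφ y
    refine div_nonneg ?_ (Real.rpow_nonneg dist_nonneg s)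
    have hre1 : (φ y).re ≤ 1 := by
      calc (φ y).re ≤ |(φ y).re| := le_abs_self _
        _ ≤ ‖φ y‖ := Complex.abs_re_le_norm _
        _ = 1 := by rw [hφ.2.2 y]
    linarith
  refine ⟨?_, fun φ hφ => hInvEq φ hφ, ?_⟩
  · intro φ hφ
    refine ⟨hInt φ hφ, Complex.conj_eq_iff_im.mp (hconj φ hφ), ?_, ?_⟩
    · rw [hre_eq φ hφ]
      exact integral_nonneg (hre_nonneg φ hφ)
    · constructor
      · intro h0
        by_contra hne
        push_neg at hne
        obtain ⟨x, hx⟩ := hne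
        have hint' : Integrable (fun y => (1 - (φ y).re) / dist (1 : X) y ^ s) μ := by
          have h := (hInt φ hφ).re
          simp only [RCLike.re_to_complex] at h
          refine h.congr (ae_of_all _ fun y => ?_)
          show ((1 - φ y) / ((dist (1 : X) y ^ s : ℝ) : ℂ)).re
            = (1 - (φ y).re) / dist (1 : X) y ^ s
          rw [Complex.div_ofReal_re, Complex.sub_re, Complex.one_re]
        have hpos : 0 < (ellAlpha μ s φ).re := by
          rw [hre_eq φ hφ]
          rw [integral_pos_iff_support_of_nonneg (hre_nonneg φ hφ) hint']
          have hU : IsOpen {y : X | φ y ≠ 1} := by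
            have : {y : X | φ y ≠ 1} = φ ⁻¹' ({1}ᶜ) := rfl
            rw [this]
            exact isOpen_compl_singleton.preimage hφ.1
          have hsub : {y : X | φ y ≠ 1} ⊆
              Function.support (fun y => (1 - (φ y).re) / dist (1 : X) y ^ s) := by
            intro y hy
            have hyne : φ y ≠ 1 := hy
            have hre1 : (φ y).re ≤ 1 := by
              calc (φ y).re ≤ |(φ y).re| := le_abs_self _
                _ ≤ ‖φ y‖ := Complex.abs_re_le_norm _
                _ = 1 := by rw [hφ.2.2 y]
            have hrelt : (φ y).re < 1 := by
              rcases eq_or_lt_of_le hre1 with he | hl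
              · exfalso
                apply hyne
                have hnsq : Complex.normSq (φ y) = 1 := by
                  rw [← Complex.sq_norm, hφ.2.2 y]
                  norm_num
                rw [Complex.normSq_apply] at hnsq
                have him : (φ y).im = 0 := by nlinarith
                exact Complex.ext (by rw [he, Complex.one_re]) (by rw [him, Complex.one_im])
              · exact hl
            have hdy0 : 0 < dist (1 : X) y := by
              rw [dist_pos]
              intro h1
              exact hyne (by rw [← h1, isChar_map_one hφ])
            have : 0 < (1 - (φ y).re) / dist (1 : X) y ^ s :=
              div_pos (by linarith) (Real.rpow_pos_of_pos hdy0 s)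
            exact Function.mem_support.mpr (ne_of_gt this)
          calc (0 : ℝ≥0∞) < μ {y : X | φ y ≠ 1} := hU.measure_pos μ ⟨x, hx⟩
            _ ≤ μ (Function.support (fun y => (1 - (φ y).re) / dist (1 : X) y ^ s)) :=
              measure_mono hsub
        rw [h0] at hpos
        simp at hpos
      · intro h
        unfold ellAlpha
        have hfz : (fun y => (1 - φ y) / ((dist (1 : X) y ^ s : ℝ) : ℂ)) = fun _ => 0 := by
          funext y
          rw [h y]
          simp
        rw [hfz, integral_zero]
  · refine ⟨(∫ y, dist (1 : X) y ^ (1 - s) ∂μ) + 1, ?_, ?_⟩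
    · have := integral_nonneg (μ := μ) (f := fun y : X => dist (1 : X) y ^ (1 - s))
        (fun y : X => Real.rpow_nonneg (dist_nonneg (x := (1 : X)) (y := y)) (1 - s))
      linarith
    · intro φ ψ hφ hψ K hK
      have hφψ : IsChar (fun x => φ x * ψ x) := by
        refine ⟨hφ.1.mul hψ.1, fun a b => ?_, fun a => ?_⟩
        · show φ (a * b) * ψ (a * b) = φ a * ψ a * (φ b * ψ b)
          rw [hφ.2.1, hψ.2.1]; ring
        · show ‖φ a * ψ a‖ = 1
          rw [norm_mul, hφ.2.2, hψ.2.2, one_mul]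
      have h1 := hInt _ hφψ
      have h2 := hInt ψ hψ
      have hdiff : ellAlpha μ s (fun x => φ x * ψ x) - ellAlpha μ s ψ
          = ∫ y, ((1 - φ y * ψ y) / ((dist (1 : X) y ^ s : ℝ) : ℂ)
              - (1 - ψ y) / ((dist (1 : X) y ^ s : ℝ) : ℂ)) ∂μ :=
        (integral_sub h1 h2).symm
      rw [hdiff]
      have hbound : ∀ y : X,
          ‖(1 - φ y * ψ y) / ((dist (1 : X) y ^ s : ℝ) : ℂ)
              - (1 - ψ y) / ((dist (1 : X) y ^ s : ℝ) : ℂ)‖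
            ≤ (K : ℝ) * dist (1 : X) y ^ (1 - s) := by
        intro y
        have heq : (1 - φ y * ψ y) / ((dist (1 : X) y ^ s : ℝ) : ℂ)
            - (1 - ψ y) / ((dist (1 : X) y ^ s : ℝ) : ℂ)
            = ψ y * ((1 - φ y) / ((dist (1 : X) y ^ s : ℝ) : ℂ)) := by
          rw [div_sub_div_same, ← mul_div_assoc]
          congr 1
          ring
        rw [heq, norm_mul, hψ.2.2, one_mul]
        exact char_norm_div_le hφ hK s y
      calc ‖∫ y, ((1 - φ y * ψ y) / ((dist (1 : X) y ^ s : ℝ) : ℂ)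
              - (1 - ψ y) / ((dist (1 : X) y ^ s : ℝ) : ℂ)) ∂μ‖
          ≤ ∫ y, (K : ℝ) * dist (1 : X) y ^ (1 - s) ∂μ :=
            norm_integral_le_of_norm_le (hkey.const_mul _) (ae_of_all _ hbound)
        _ = (K : ℝ) * ∫ y, dist (1 : X) y ^ (1 - s) ∂μ := integral_const_mul _ _
        _ ≤ ((∫ y, dist (1 : X) y ^ (1 - s) ∂μ) + 1) * (K : ℝ) := by
            nlinarith [NNReal.coe_nonneg K,
              integral_nonneg (μ := μ) (f := fun y : X => dist (1 : X) y ^ (1 - s))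
                (fun y : X => Real.rpow_nonneg (dist_nonneg (x := (1 : X)) (y := y)) (1 - s))]
end
end
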